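/- Let n ≥ 2 and let w, w' ∈ {0,1}^{{-1,1}^n} be distinct, each of Hamming weight 2^{n-1}, with Hamming distance dist(w, w') ≥ 2^n/4. Then vol(B_w ∩ B_{w'}) / vol(B_w) ≤ (1 + 3/(8(n-1))) / (1 + 1/(2(n-1))) ≤ 1 - 1/(8n). -/

import Mathlib

open MeasureTheory Set ENNReal Finset

/-- The cross polytope `O_n`: the convex hull of `{±e_i : i ∈ [n]}`. -/
noncomputable def crossPolytope (n : ℕ) : Set (Fin n → ℝ) :=
  convexHull ℝ ((Set.range fun i : Fin n => Pi.single i (1 : ℝ)) ∪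
    (Set.range fun i : Fin n => Pi.single i (-1 : ℝ)))

/-- The sign vector in `{-1,1}^n` associated to `b : Fin n → Bool`. -/
def signVec (n : ℕ) (b : Fin n → Bool) : Fin n → ℝ := fun i => if b i then 1 else -1

/-- The peak attached to the facet `F_s = conv{s_i e_i}`, namely
`conv(F_s ∪ {s/(n-1)})`. -/
noncomputable def peak (n : ℕ) (s : Fin n → ℝ) : Set (Fin n → ℝ) :=
  convexHull ℝ ((Set.range fun i : Fin n => Pi.single i (s i)) ∪ {((n : ℝ) - 1)⁻¹ • s})

/-- The cross polytope with the peaks indexed by the 0–1 vector `w` attached. -/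
noncomputable def body (n : ℕ) (w : (Fin n → Bool) → Bool) : Set (Fin n → ℝ) :=
  crossPolytope n ∪ ⋃ (b : Fin n → Bool) (_ : w b = true), peak n (signVec n b)

/-- The Hamming weight of a binary word: the number of coordinates equal to `true`. -/
def wt {ι : Type*} [Fintype ι] (c : ι → Bool) : ℕ :=
  (Finset.univ.filter fun i => c i = true).card

namespace CPaux

variable {n : ℕ}

/-- The linear functional `x ↦ ∑ s i * x i`. -/
def lf (s : Fin n → ℝ) : (Fin n → ℝ) →ₗ[ℝ] ℝ where
  toFun x := ∑ i, s i * x i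
  map_add' x y := by simp [mul_add, Finset.sum_add_distrib]
  map_smul' c x := by
    simp only [Pi.smul_apply, smul_eq_mul, RingHom.id_apply, Finset.mul_sum]
    exact Finset.sum_congr rfl fun i _ => by ring

lemma lf_apply (s x : Fin n → ℝ) : lf s x = ∑ i, s i * x i := rfl

lemma lf_single (s : Fin n → ℝ) (i : Fin n) (c : ℝ) : lf s (Pi.single i c) = s i * c := by
  rw [lf_apply]
  rw [Finset.sum_eq_single i]
  · simp
  · intro j _ hj; simp [Pi.single_eq_of_ne hj]
  · simp

lemma signVec_sq (b : Fin n → Bool) (i : Fin n) : signVec n b i * signVec n b i = 1 := by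
  unfold signVec; by_cases h : b i <;> simp [h]

lemma signVec_abs (b : Fin n → Bool) (i : Fin n) : |signVec n b i| = 1 := by
  unfold signVec; by_cases h : b i <;> simp [h]

lemma lf_self (b : Fin n → Bool) : lf (signVec n b) (signVec n b) = (n : ℝ) := by
  rw [lf_apply]
  rw [Finset.sum_congr rfl fun i _ => signVec_sq b i]
  simp

/-- The cross polytope lies in the halfspace `⟨s,·⟩ ≤ 1`. -/
lemma cross_subset_halfspace (b : Fin n → Bool) :
    crossPolytope n ⊆ {x | lf (signVec n b) x ≤ 1} := by
  apply convexHull_min _ (convex_halfSpace_le (lf (signVec n b)).isLinear 1)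
  rintro x (⟨i, rfl⟩ | ⟨i, rfl⟩) <;> simp only [Set.mem_setOf_eq, lf_single] <;>
    unfold signVec <;> by_cases h : b i <;> simp [h]

/-- Peak lies in halfspace `⟨s,·⟩ ≥ 1`. -/
lemma peak_subset_ge (hn : 2 ≤ n) (b : Fin n → Bool) :
    peak n (signVec n b) ⊆ {x | 1 ≤ lf (signVec n b) x} := by
  have hnn : (2:ℝ) ≤ (n:ℝ) := by exact_mod_cast hn
  have hc : (0:ℝ) < (n:ℝ) - 1 := by linarith
  apply convexHull_min _ (convex_halfSpace_ge (lf (signVec n b)).isLinear 1)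
  rintro x (⟨i, rfl⟩ | rfl)
  · simp [Set.mem_setOf_eq, lf_single, signVec_sq b i]
  · show (1:ℝ) ≤ lf (signVec n b) (((n:ℝ) - 1)⁻¹ • signVec n b)
    rw [LinearMap.map_smul, lf_self, smul_eq_mul, le_inv_mul_iff₀ hc]
    linarith

lemma sign_mul_le_one (b c : Fin n → Bool) (i : Fin n) :
    signVec n c i * signVec n b i ≤ 1 := by
  unfold signVec; by_cases h1 : c i <;> by_cases h2 : b i <;> norm_num [h1, h2]

/-- Peak for `b` lies in halfspace `⟨s_c,·⟩ ≤ 1` when `b ≠ c`. -/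
lemma peak_subset_le (hn : 2 ≤ n) {b c : Fin n → Bool} (hbc : b ≠ c) :
    peak n (signVec n b) ⊆ {x | lf (signVec n c) x ≤ 1} := by
  have hnn : (2:ℝ) ≤ (n:ℝ) := by exact_mod_cast hn
  have hc : (0:ℝ) < (n:ℝ) - 1 := by linarith
  obtain ⟨i0, hi0⟩ := Function.ne_iff.mp hbc
  have hsum : lf (signVec n c) (signVec n b) ≤ (n:ℝ) - 2 := by
    have hle : ∀ i ∈ Finset.univ, signVec n c i * signVec n b i
        ≤ (1 : ℝ) + (if i = i0 then (-2:ℝ) else 0) := by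
      intro i _
      rcases eq_or_ne i i0 with h | h
      · subst h
        have : signVec n c i * signVec n b i = -1 := by
          unfold signVec
          by_cases h1 : c i <;> by_cases h2 : b i <;> simp_all
        rw [this]; norm_num
      · have := sign_mul_le_one b c i
        simp only [h, if_neg h]; simpa using this
    calc lf (signVec n c) (signVec n b)
        = ∑ i, signVec n c i * signVec n b i := lf_apply _ _
      _ ≤ ∑ i : Fin n, ((1:ℝ) + if i = i0 then (-2:ℝ) else 0) := Finset.sum_le_sum hle
      _ = (n:ℝ) - 2 := by
          rw [Finset.sum_add_distrib, Finset.sum_ite_eq' Finset.univ i0 (fun _ => (-2:ℝ))]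
          simp; ring
  apply convexHull_min _ (convex_halfSpace_le (lf (signVec n c)).isLinear 1)
  rintro x (⟨i, rfl⟩ | rfl)
  · simp only [Set.mem_setOf_eq, lf_single]
    exact sign_mul_le_one b c i
  · show lf (signVec n c) (((n:ℝ) - 1)⁻¹ • signVec n b) ≤ 1
    rw [LinearMap.map_smul, smul_eq_mul]
    have h1 : ((n:ℝ) - 1)⁻¹ * lf (signVec n c) (signVec n b)
        ≤ ((n:ℝ) - 1)⁻¹ * ((n:ℝ) - 2) :=
      mul_le_mul_of_nonneg_left hsum (by positivity)
    have h2 : ((n:ℝ) - 1)⁻¹ * ((n:ℝ) - 2) ≤ 1 := by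
      rw [inv_mul_le_iff₀ hc]; linarith
    linarith

/-- Hyperplanes `⟨s,·⟩ = 1` are null. -/
lemma hyper_null (hn : 2 ≤ n) (b : Fin n → Bool) :
    volume {x : Fin n → ℝ | lf (signVec n b) x = 1} = 0 := by
  have hnR : (0:ℝ) < (n:ℝ) := by positivity
  set f := lf (signVec n b) with hf
  set x₀ : Fin n → ℝ := (n:ℝ)⁻¹ • signVec n b with hx₀
  have hfx₀ : f x₀ = 1 := by
    rw [hx₀, hf, LinearMap.map_smul, lf_self, smul_eq_mul, inv_mul_cancel₀ hnR.ne']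
  set S : AffineSubspace ℝ (Fin n → ℝ) := AffineSubspace.mk' x₀ (LinearMap.ker f) with hS
  have hset : {x : Fin n → ℝ | f x = 1} = (S : Set (Fin n → ℝ)) := by
    ext x
    simp only [Set.mem_setOf_eq, SetLike.mem_coe, hS, AffineSubspace.mem_mk',
      vsub_eq_sub, LinearMap.mem_ker, map_sub, hfx₀]
    constructor
    · intro h; rw [h]; ring
    · intro h; linarith
  have hne : S ≠ ⊤ := by
    intro htop
    have h0 : (0 : Fin n → ℝ) ∈ S := htop ▸ AffineSubspace.mem_top ℝ _ 0
    rw [hS, AffineSubspace.mem_mk'] at h0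
    simp only [vsub_eq_sub, zero_sub, LinearMap.mem_ker, map_neg, hfx₀] at h0
    norm_num at h0
  rw [hset]
  exact MeasureTheory.Measure.addHaar_affineSubspace volume S hne

/-- The corner simplex `conv{0, e_1, ..., e_n}`. -/
noncomputable def corner (n : ℕ) : Set (Fin n → ℝ) :=
  convexHull ℝ (insert 0 (Set.range fun i : Fin n => Pi.single i (1 : ℝ)))

/-- The diagonal linear map `x ↦ (s i * x i)`. -/
def diagL (s : Fin n → ℝ) : (Fin n → ℝ) →ₗ[ℝ] (Fin n → ℝ) where
  toFun x := fun i => s i * x i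
  map_add' x y := by ext i; simp [mul_add]
  map_smul' c x := by ext i; simp; ring

lemma diagL_det (s : Fin n → ℝ) : LinearMap.det (diagL s) = ∏ i, s i := by
  rw [← LinearMap.det_toMatrix']
  have : LinearMap.toMatrix' (diagL s) = Matrix.diagonal s := by
    ext i j
    rw [LinearMap.toMatrix'_apply]
    show s i * (Pi.single j (1:ℝ) : Fin n → ℝ) i = _
    rcases eq_or_ne i j with h | h <;> simp [h, Matrix.diagonal_apply, diagL, Pi.single_apply]
  rw [this, Matrix.det_diagonal]

/-- The shear `x ↦ x - ((n-1)⁻¹ ∑ x_j) 𝟙`. -/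
noncomputable def shear (n : ℕ) : (Fin n → ℝ) →ₗ[ℝ] (Fin n → ℝ) where
  toFun x := fun i => x i - ((n:ℝ) - 1)⁻¹ * ∑ j, x j
  map_add' x y := by ext i; simp [Finset.sum_add_distrib]; ring
  map_smul' c x := by
    ext i
    show c * x i - ((n:ℝ) - 1)⁻¹ * ∑ j, c * x j = c * (x i - ((n:ℝ) - 1)⁻¹ * ∑ j, x j)
    rw [← Finset.mul_sum]
    ring

lemma shear_det (n : ℕ) : LinearMap.det (shear n) = 1 - (n:ℝ) * ((n:ℝ) - 1)⁻¹ := by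
  rw [← LinearMap.det_toMatrix']
  have hM : LinearMap.toMatrix' (shear n) =
      1 + Matrix.replicateCol Unit (fun _ : Fin n => -(((n:ℝ) - 1)⁻¹)) *
        Matrix.replicateRow Unit (fun _ : Fin n => (1:ℝ)) := by
    ext i j
    rw [LinearMap.toMatrix'_apply]
    show (Pi.single j (1:ℝ) : Fin n → ℝ) i - ((n:ℝ) - 1)⁻¹ * (∑ k, (Pi.single j (1:ℝ) : Fin n → ℝ) k) = _
    simp only [Pi.single_apply]
    rw [Finset.sum_ite_eq' Finset.univ j (fun _ => (1:ℝ))]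
    rw [Matrix.add_apply, Matrix.mul_apply]
    simp only [Matrix.replicateCol_apply, Matrix.replicateRow_apply, Finset.univ_unique, Finset.sum_singleton,
      Matrix.one_apply, Finset.mem_univ, if_true]
    ring
  rw [hM, Matrix.det_one_add_replicateCol_mul_replicateRow]
  simp only [dotProduct, Finset.sum_const, Finset.card_univ, Fintype.card_fin,
    nsmul_eq_mul, mul_neg, mul_one]
  ring

/-- The affine map sending the corner simplex onto the peak for `b`. -/
noncomputable def Tmap (n : ℕ) (b : Fin n → Bool) : (Fin n → ℝ) →ᵃ[ℝ] (Fin n → ℝ) where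
  toFun x := (diagL (signVec n b)).comp (shear n) x + ((n:ℝ) - 1)⁻¹ • signVec n b
  linear := (diagL (signVec n b)).comp (shear n)
  map_vadd' p v := by
    simp only [vadd_eq_add, map_add]
    abel

lemma Tmap_zero (b : Fin n → Bool) : Tmap n b 0 = ((n:ℝ) - 1)⁻¹ • signVec n b := by
  show (diagL (signVec n b)).comp (shear n) 0 + _ = _
  rw [map_zero, zero_add]

lemma diagL_apply (s x : Fin n → ℝ) (j : Fin n) : diagL s x j = s j * x j := rfl

lemma shear_apply (x : Fin n → ℝ) (j : Fin n) :
    shear n x j = x j - ((n:ℝ) - 1)⁻¹ * ∑ k, x k := rfl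

lemma Tmap_apply (b : Fin n → Bool) (x : Fin n → ℝ) :
    Tmap n b x = (diagL (signVec n b)).comp (shear n) x + ((n:ℝ) - 1)⁻¹ • signVec n b := rfl

lemma Tmap_single (b : Fin n → Bool) (i : Fin n) :
    Tmap n b (Pi.single i 1) = Pi.single i (signVec n b i) := by
  have hsum : ∑ k, Pi.single i (1:ℝ) k = 1 := by
    rw [Finset.sum_eq_single i] <;> simp +contextual [Pi.single_eq_of_ne]
  ext j
  rw [Tmap_apply, Pi.add_apply, LinearMap.comp_apply, diagL_apply, shear_apply, hsum]
  rcases eq_or_ne j i with h | h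
  · subst h
    simp only [Pi.single_eq_same, Pi.smul_apply, smul_eq_mul]
    ring
  · simp only [Pi.single_eq_of_ne h, Pi.smul_apply, smul_eq_mul]
    ring

lemma peak_eq_image (b : Fin n → Bool) :
    peak n (signVec n b) = Tmap n b '' corner n := by
  rw [corner, AffineMap.image_convexHull, Set.image_insert_eq, ← Set.range_comp, Tmap_zero]
  have h2 : ((Tmap n b : (Fin n → ℝ) → (Fin n → ℝ)) ∘ fun i : Fin n => Pi.single i (1:ℝ))
      = fun i => Pi.single i (signVec n b i) := funext fun i => Tmap_single b i
  rw [h2, peak, Set.union_singleton]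

lemma abs_det_M (hn : 2 ≤ n) (b : Fin n → Bool) :
    |LinearMap.det ((diagL (signVec n b)).comp (shear n))| = ((n:ℝ) - 1)⁻¹ := by
  have hnn : (2:ℝ) ≤ (n:ℝ) := by exact_mod_cast hn
  have hc : (0:ℝ) < (n:ℝ) - 1 := by linarith
  rw [LinearMap.det_comp, diagL_det, shear_det]
  have h1 : (1:ℝ) - (n:ℝ) * ((n:ℝ) - 1)⁻¹ = -(((n:ℝ) - 1)⁻¹) := by
    field_simp
    ring
  rw [h1, abs_mul, abs_neg, abs_inv, Finset.abs_prod]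
  rw [Finset.prod_congr rfl fun i _ => signVec_abs b i]
  rw [abs_of_pos hc]
  simp

lemma volume_peak (hn : 2 ≤ n) (b : Fin n → Bool) :
    volume (peak n (signVec n b)) = ENNReal.ofReal (((n:ℝ) - 1)⁻¹) * volume (CPaux.corner n) := by
  rw [peak_eq_image b]
  have himg : Tmap n b '' corner n = (fun y => y + ((n:ℝ) - 1)⁻¹ • signVec n b) ''
      (((diagL (signVec n b)).comp (shear n)) '' corner n) := by
    rw [Set.image_image]
    rfl
  rw [himg, Set.image_add_right, measure_preimage_add_right,
    MeasureTheory.Measure.addHaar_image_linearMap, abs_det_M hn b]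

lemma abs_single_sum (i : Fin n) (c : ℝ) : ∑ j, |Pi.single i c j| = |c| := by
  rw [Finset.sum_eq_single i] <;> simp +contextual [Pi.single_eq_of_ne]

lemma cross_subset_l1 : crossPolytope n ⊆ {x | ∑ i, |x i| ≤ 1} := by
  apply convexHull_min
  · rintro x (⟨i, rfl⟩ | ⟨i, rfl⟩) <;> simp [Set.mem_setOf_eq, abs_single_sum]
  · intro x hx y hy a b ha hb hab
    simp only [Set.mem_setOf_eq] at hx hy ⊢
    calc ∑ i, |(a • x + b • y) i| ≤ ∑ i, (a * |x i| + b * |y i|) := by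
          apply Finset.sum_le_sum
          intro i _
          show |a * x i + b * y i| ≤ _
          calc |a * x i + b * y i| ≤ |a * x i| + |b * y i| := abs_add_le _ _
            _ = a * |x i| + b * |y i| := by
                rw [abs_mul, abs_mul, abs_of_nonneg ha, abs_of_nonneg hb]
      _ = a * ∑ i, |x i| + b * ∑ i, |y i| := by
          rw [Finset.sum_add_distrib, ← Finset.mul_sum, ← Finset.mul_sum]
      _ ≤ a * 1 + b * 1 := by
          have := mul_le_mul_of_nonneg_left hx ha
          have := mul_le_mul_of_nonneg_left hy hb
          linarith
      _ = 1 := by linarith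

lemma mem_corner {y : Fin n → ℝ} (h0 : ∀ i, 0 ≤ y i) (h1 : ∑ i, y i ≤ 1) : y ∈ corner n := by
  classical
  set w : Option (Fin n) → ℝ := fun o => o.elim (1 - ∑ i, y i) y with hw
  set z : Option (Fin n) → (Fin n → ℝ) := fun o => o.elim 0 (fun i => Pi.single i 1) with hz
  have hw0 : ∀ o ∈ (Finset.univ : Finset (Option (Fin n))), 0 ≤ w o := by
    rintro (_ | i) _
    · simpa [hw] using by linarith
    · exact h0 i
  have hwsum : ∑ o : Option (Fin n), w o = 1 := by
    rw [Fintype.sum_option]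
    simp [hw]
  have hzmem : ∀ o ∈ (Finset.univ : Finset (Option (Fin n))), z o ∈
      (insert 0 (Set.range fun i : Fin n => Pi.single i (1 : ℝ))) := by
    rintro (_ | i) _
    · exact Set.mem_insert _ _
    · exact Set.mem_insert_iff.mpr (Or.inr ⟨i, rfl⟩)
  have hmem := Finset.centerMass_mem_convexHull Finset.univ hw0 (by rw [hwsum]; norm_num) hzmem
  have hcm : (Finset.univ : Finset (Option (Fin n))).centerMass w z = y := by
    rw [Finset.centerMass, hwsum, inv_one, one_smul, Fintype.sum_option]
    have : ∀ i : Fin n, w (some i) • z (some i) = Pi.single i (y i) := by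
      intro i
      ext j
      simp only [hw, hz, Option.elim, Pi.smul_apply, smul_eq_mul]
      rcases eq_or_ne j i with h | h
      · subst h; simp [Pi.single_eq_same]
      · simp [Pi.single_eq_of_ne h]
    rw [Finset.sum_congr rfl fun i _ => this i]
    simp only [hw, hz, Option.elim, smul_zero, zero_add]
    exact Finset.univ_sum_single y
  rw [hcm] at hmem
  exact hmem

lemma cross_subset_union :
    crossPolytope n ⊆ ⋃ b : Fin n → Bool, diagL (signVec n b) '' corner n := by
  intro x hx
  have hl1 := cross_subset_l1 hx
  refine Set.mem_iUnion.mpr ⟨fun i => decide (0 ≤ x i), ⟨fun i => |x i|, ?_, ?_⟩⟩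
  · exact mem_corner (fun i => abs_nonneg _) hl1
  · ext i
    show signVec n _ i * |x i| = x i
    unfold signVec
    by_cases h : 0 ≤ x i
    · simp [h, abs_of_nonneg h]
    · push_neg at h
      simp [not_le.mpr h, abs_of_neg h]

lemma volume_cross_le :
    volume (crossPolytope n) ≤ (2 ^ n : ℕ) * volume (CPaux.corner n) := by
  classical
  calc volume (crossPolytope n)
      ≤ volume (⋃ b : Fin n → Bool, diagL (signVec n b) '' corner n) :=
        measure_mono cross_subset_union
    _ ≤ ∑ b : Fin n → Bool, volume (diagL (signVec n b) '' corner n) :=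
        measure_iUnion_fintype_le _ _
    _ = ∑ _b : Fin n → Bool, volume (CPaux.corner n) := by
        refine Finset.sum_congr rfl fun b _ => ?_
        rw [MeasureTheory.Measure.addHaar_image_linearMap, diagL_det, Finset.abs_prod,
          Finset.prod_congr rfl fun i _ => signVec_abs b i]
        simp
    _ = (2 ^ n : ℕ) * volume (CPaux.corner n) := by
        rw [Finset.sum_const, Finset.card_univ]
        have : Fintype.card (Fin n → Bool) = 2 ^ n := by
          simp [Fintype.card_fun]
        rw [this, nsmul_eq_mul]

lemma corner_volume_ne_top : volume (CPaux.corner n) ≠ ⊤ :=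
  (((Set.finite_range fun i : Fin n => Pi.single i (1:ℝ)).insert
    0).isCompact_convexHull ℝ |>.measure_lt_top).ne

lemma cross_volume_ne_top : volume (crossPolytope n) ≠ ⊤ :=
  (((Set.finite_range fun i : Fin n => Pi.single i (1:ℝ)).union
    (Set.finite_range fun i : Fin n => Pi.single i (-1:ℝ))).isCompact_convexHull ℝ |>.measure_lt_top).ne

lemma body_eq (w : (Fin n → Bool) → Bool) :
    body n w = crossPolytope n ∪
      ⋃ b ∈ Finset.univ.filter (fun b : Fin n → Bool => w b = true),
        peak n (signVec n b) := by
  unfold body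
  congr 1
  ext x
  simp

lemma peak_nullmeasurable (b : Fin n → Bool) :
    NullMeasurableSet (peak n (signVec n b)) volume :=
  (convex_convexHull ℝ _).nullMeasurableSet volume

lemma volume_body (hn : 2 ≤ n) (w : (Fin n → Bool) → Bool) :
    volume (body n w) = volume (crossPolytope n)
      + (wt w : ℝ≥0∞) * (ENNReal.ofReal (((n:ℝ) - 1)⁻¹) * volume (CPaux.corner n)) := by
  classical
  rw [body_eq]
  have hm : NullMeasurableSet
      (⋃ b ∈ Finset.univ.filter (fun b : Fin n → Bool => w b = true),
        peak n (signVec n b)) volume :=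
    NullMeasurableSet.biUnion (Finset.univ.filter
      (fun b : Fin n → Bool => w b = true)).countable_toSet
      (fun b _ => peak_nullmeasurable b)
  have hd : AEDisjoint volume (crossPolytope n)
      (⋃ b ∈ Finset.univ.filter (fun b : Fin n → Bool => w b = true),
        peak n (signVec n b)) := by
    have hsub : crossPolytope n ∩
        (⋃ b ∈ Finset.univ.filter (fun b : Fin n → Bool => w b = true),
          peak n (signVec n b)) ⊆
        ⋃ b : Fin n → Bool, {x | lf (signVec n b) x = 1} := by
      rintro x ⟨hxO, hxU⟩
      simp only [Set.mem_iUnion] at hxU ⊢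
      obtain ⟨b, _, hb⟩ := hxU
      exact ⟨b, le_antisymm (cross_subset_halfspace b hxO) (peak_subset_ge hn b hb)⟩
    exact measure_mono_null hsub (measure_iUnion_null fun b => hyper_null hn b)
  rw [measure_union₀ hm hd]
  rw [measure_biUnion_finset₀ ?pd (fun b _ => peak_nullmeasurable b)]
  case pd =>
    intro b _ c _ hbc
    show volume (peak n (signVec n b) ∩ peak n (signVec n c)) = 0
    apply measure_mono_null _ (hyper_null hn c)
    rintro x ⟨hxb, hxc⟩
    exact le_antisymm (peak_subset_le hn hbc hxb) (peak_subset_ge hn c hxc)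
  congr 1
  rw [Finset.sum_congr rfl fun b _ => volume_peak hn b, Finset.sum_const]
  rw [nsmul_eq_mul]
  rfl

lemma inter_subset (hn : 2 ≤ n) (w w' : (Fin n → Bool) → Bool) :
    body n w ∩ body n w' ⊆ body n (fun b => w b && w' b) ∪
      ⋃ b : Fin n → Bool, {x | lf (signVec n b) x = 1} := by
  rintro x ⟨hx, hx'⟩
  simp only [body, Set.mem_union, Set.mem_iUnion] at hx hx' ⊢
  rcases hx with hO | ⟨b, hb, hxb⟩
  · exact Or.inl (Or.inl hO)
  rcases hx' with hO' | ⟨c, hc, hxc⟩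
  · exact Or.inl (Or.inl hO')
  rcases eq_or_ne b c with rfl | hbc
  · exact Or.inl (Or.inr ⟨b, by simp [hb, hc], hxb⟩)
  · exact Or.inr ⟨c, le_antisymm (peak_subset_le hn hbc hxb) (peak_subset_ge hn c hxc)⟩

lemma volume_inter_le (hn : 2 ≤ n) (w w' : (Fin n → Bool) → Bool) :
    volume (body n w ∩ body n w') ≤ volume (body n (fun b => w b && w' b)) := by
  calc volume (body n w ∩ body n w')
      ≤ volume (body n (fun b => w b && w' b) ∪
          ⋃ b : Fin n → Bool, {x | lf (signVec n b) x = 1}) :=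
        measure_mono (inter_subset hn w w')
    _ ≤ volume (body n (fun b => w b && w' b)) +
          volume (⋃ b : Fin n → Bool, {x | lf (signVec n b) x = 1}) := measure_union_le _ _
    _ = volume (body n (fun b => w b && w' b)) := by
        rw [measure_iUnion_null fun b => hyper_null hn b, add_zero]

lemma wt_identity (w w' : (Fin n → Bool) → Bool) :
    wt w + wt w' = hammingDist w w' + 2 * wt (fun b => w b && w' b) := by
  classical
  unfold wt
  rw [hammingDist]
  simp only [Finset.card_filter]
  rw [← Finset.sum_add_distrib, Finset.mul_sum, ← Finset.sum_add_distrib]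
  apply Finset.sum_congr rfl
  intro b _
  rcases Bool.dichotomy (w b) with hb | hb <;> rcases Bool.dichotomy (w' b) with hb' | hb' <;>
    simp [hb, hb']

end CPaux

theorem volume_inter_ratio_bodies (n : ℕ) (hn : 2 ≤ n)
    (w w' : (Fin n → Bool) → Bool) (hne : w ≠ w')
    (hw : wt w = 2 ^ (n - 1)) (hw' : wt w' = 2 ^ (n - 1))
    (hdist : 2 ^ n / 4 ≤ hammingDist w w') :
    (volume (body n w ∩ body n w')).toReal / (volume (body n w)).toReal ≤
      (1 + 3 / (8 * ((n : ℝ) - 1))) / (1 + 1 / (2 * ((n : ℝ) - 1))) ∧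
    (1 + 3 / (8 * ((n : ℝ) - 1))) / (1 + 1 / (2 * ((n : ℝ) - 1))) ≤
      1 - 1 / (8 * (n : ℝ)) := by
  classical
  have hnn : (2:ℝ) ≤ (n:ℝ) := by exact_mod_cast hn
  have hcpos : (0:ℝ) < (n:ℝ) - 1 := by linarith
  have hcne : ((n:ℝ) - 1) ≠ 0 := hcpos.ne'
  have h84 : (0:ℝ) < 8 * ((n:ℝ) - 1) + 4 := by linarith
  have e1 : (0:ℝ) < 1 + 1 / (2 * ((n:ℝ) - 1)) := by
    have h2 : (0:ℝ) < 2 * ((n:ℝ) - 1) := by linarith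
    have := div_nonneg zero_le_one h2.le
    linarith
  have key : (1 + 3 / (8 * ((n : ℝ) - 1))) / (1 + 1 / (2 * ((n : ℝ) - 1)))
      = (8 * ((n:ℝ) - 1) + 3) / (8 * ((n:ℝ) - 1) + 4) := by
    rw [div_eq_div_iff e1.ne' h84.ne']
    field_simp
    ring
  have second : (1 + 3 / (8 * ((n : ℝ) - 1))) / (1 + 1 / (2 * ((n : ℝ) - 1)))
      ≤ 1 - 1 / (8 * (n : ℝ)) := by
    rw [key, div_le_iff₀ h84, ← sub_nonneg]
    have hexp : (1 - 1 / (8 * (n:ℝ))) * (8 * ((n:ℝ) - 1) + 4) - (8 * ((n:ℝ) - 1) + 3)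
        = 1 / (2 * (n:ℝ)) := by
      field_simp
      ring
    rw [hexp]
    exact div_nonneg zero_le_one (by linarith)
  refine ⟨?_, second⟩
  -- notation
  have hVfin : volume (crossPolytope n) ≠ ⊤ := CPaux.cross_volume_ne_top
  have hCfin : volume (CPaux.corner n) ≠ ⊤ := CPaux.corner_volume_ne_top
  have hqC : ENNReal.ofReal (((n:ℝ) - 1)⁻¹) * volume (CPaux.corner n) ≠ ⊤ :=
    ENNReal.mul_ne_top ENNReal.ofReal_ne_top hCfin
  have hqr : (ENNReal.ofReal (((n:ℝ) - 1)⁻¹)).toReal = ((n:ℝ) - 1)⁻¹ :=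
    ENNReal.toReal_ofReal (inv_nonneg.mpr (by linarith))
  set m := wt (fun b => w b && w' b) with hmdef
  set v := (volume (crossPolytope n)).toReal with hvdef
  set d := (volume (CPaux.corner n)).toReal with hddef
  have hd0 : 0 ≤ d := ENNReal.toReal_nonneg
  have hv0 : 0 ≤ v := ENNReal.toReal_nonneg
  -- denominator
  have hDr : (volume (body n w)).toReal = v + (2:ℝ)^(n-1) * (((n:ℝ)-1)⁻¹ * d) := by
    rw [CPaux.volume_body hn w, hw,
      ENNReal.toReal_add hVfin (ENNReal.mul_ne_top (ENNReal.natCast_ne_top _) hqC),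
      ENNReal.toReal_mul, ENNReal.toReal_mul, ENNReal.toReal_natCast, hqr]
    push_cast
    ring
  -- numerator
  have hNle : volume (body n w ∩ body n w') ≤ volume (crossPolytope n)
      + (m : ℝ≥0∞) * (ENNReal.ofReal (((n:ℝ) - 1)⁻¹) * volume (CPaux.corner n)) := by
    refine (CPaux.volume_inter_le hn w w').trans_eq ?_
    rw [CPaux.volume_body hn]
  have hNr : (volume (body n w ∩ body n w')).toReal ≤ v + (m:ℝ) * (((n:ℝ)-1)⁻¹ * d) := by
    have h := ENNReal.toReal_mono
      (ENNReal.add_ne_top.mpr ⟨hVfin, ENNReal.mul_ne_top (ENNReal.natCast_ne_top _) hqC⟩) hNle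
    rwa [ENNReal.toReal_add hVfin (ENNReal.mul_ne_top (ENNReal.natCast_ne_top _) hqC),
      ENNReal.toReal_mul, ENNReal.toReal_mul, ENNReal.toReal_natCast, hqr] at h
  -- cross polytope volume bound
  have hvd : v ≤ (2:ℝ)^n * d := by
    have h := ENNReal.toReal_mono (ENNReal.mul_ne_top (ENNReal.natCast_ne_top _) hCfin)
      CPaux.volume_cross_le
    rw [ENNReal.toReal_mul, ENNReal.toReal_natCast] at h
    push_cast at h
    exact h
  -- combinatorics
  have hid := CPaux.wt_identity w w'
  rw [hw, hw'] at hid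
  have hn1 : n - 1 + 1 = n := by omega
  have hpow : 2 ^ (n-1) + 2 ^ (n-1) = 2 ^ n := by
    rw [← two_mul, ← pow_succ', hn1]
  have hn2 : n - 2 + 2 = n := by omega
  have h4 : 2 ^ n = 4 * 2 ^ (n - 2) := by
    calc 2 ^ n = 2 ^ (n - 2 + 2) := by rw [hn2]
      _ = 4 * 2 ^ (n - 2) := by rw [pow_add]; ring
  have hdist' : 2 ^ (n-2) ≤ hammingDist w w' := by
    have hq4 : 2 ^ n / 4 = 2 ^ (n-2) := by omega
    omega
  have hm2 : 2 * m ≤ 3 * 2 ^ (n-2) := by omega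
  have hmR : (m:ℝ) ≤ 3/4 * (2:ℝ)^(n-1) := by
    have h1 := (Nat.cast_le (α := ℝ)).mpr hm2
    push_cast at h1
    have hp2 : ((2:ℝ))^(n-1) = 2 * (2:ℝ)^(n-2) := by
      rw [← pow_succ']
      congr 1
      omega
    rw [hp2]
    linarith
  -- case on d
  rcases eq_or_lt_of_le hd0 with hdz | hdpos
  · have hvz : v = 0 := by
      have : v ≤ 0 := by rw [← hdz, mul_zero] at hvd; exact hvd
      linarith
    rw [hDr, hvz, ← hdz, mul_zero, mul_zero, add_zero, _root_.div_zero, key]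
    exact div_nonneg (by linarith) (by linarith)
  · set p := ((n:ℝ)-1)⁻¹ * d with hpdef
    have hppos : 0 < p := mul_pos (inv_pos.mpr hcpos) hdpos
    have hDpos : 0 < (volume (body n w)).toReal := by
      rw [hDr]
      have h2 : (0:ℝ) < (2:ℝ)^(n-1) * p := by positivity
      linarith
    rw [key, div_le_div_iff₀ hDpos h84, hDr]
    have A1 := mul_le_mul_of_nonneg_right hNr h84.le
    have B1 : (m:ℝ) * p ≤ 3/4 * (2:ℝ)^(n-1) * p := mul_le_mul_of_nonneg_right hmR hppos.le
    have B2 := mul_le_mul_of_nonneg_right B1 (show (0:ℝ) ≤ 8*((n:ℝ)-1) by linarith)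
    have hnu : v ≤ 2 * (2:ℝ)^(n-1) * (((n:ℝ)-1) * p) := by
      have hdp : ((n:ℝ)-1) * p = d := by
        rw [hpdef, ← mul_assoc, mul_inv_cancel₀ hcne, one_mul]
      rw [hdp]
      have h2n : (2:ℝ)^n = 2 * (2:ℝ)^(n-1) := by
        rw [← pow_succ']
        congr 1
        omega
      rw [← h2n]
      exact hvd
    nlinarith [A1, B1, B2, hnu, hppos.le, hv0]
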